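/- Let x be a vector of n ≥ 2 positive reals. Then for every k ≥ 2, e_k(x∪{a,b})·e_{k−1}(x) ≥ e_{k+1}(x∪{a,b})·e_{k−2}(x) for all nonnegative reals a, b, where x∪{a,b} denotes the vector of length n+2 obtained by appending a and b. -/

import Mathlib

open BigOperators

/-- The elementary symmetric polynomial of degree `k` in the entries of `x`. -/
noncomputable def esym {n : ℕ} (k : ℕ) (x : Fin n → ℝ) : ℝ :=
  ∑ S ∈ Finset.univ.powersetCard k, ∏ i ∈ S, x i

lemma aux_esym_eq_esymm {n : ℕ} (k : ℕ) (x : Fin n → ℝ) :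
    esym k x = (Multiset.map x Finset.univ.val).esymm k := by
  rw [Finset.esymm_map_val]; rfl

lemma aux_map_cons {n : ℕ} (a : ℝ) (x : Fin n → ℝ) :
    Multiset.map (Fin.cons a x) (Finset.univ : Finset (Fin (n + 1))).val
      = a ::ₘ Multiset.map x Finset.univ.val := by
  rw [Fin.univ_succ, Finset.cons_val, Multiset.map_cons, Fin.cons_zero, Finset.map_val,
    Multiset.map_map]
  congr 1

lemma aux_esymm_zero (s : Multiset ℝ) : s.esymm 0 = 1 := by
  simp [Multiset.esymm, Multiset.powersetCard_zero_left]

lemma aux_esymm_cons (a : ℝ) (s : Multiset ℝ) (k : ℕ) :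
    (a ::ₘ s).esymm (k + 1) = s.esymm (k + 1) + a * s.esymm k := by
  rw [Multiset.esymm, Multiset.powersetCard_cons, Multiset.map_add, Multiset.sum_add,
    Multiset.map_map]
  congr 1
  rw [Multiset.esymm, ← Multiset.sum_map_mul_left]
  congr 1
  apply Multiset.map_congr rfl
  intro t _
  simp

lemma aux_esymm_nonneg (s : Multiset ℝ) (hs : ∀ r ∈ s, 0 ≤ r) (k : ℕ) :
    0 ≤ s.esymm k := by
  induction s using Multiset.induction generalizing k with
  | empty =>
      cases k with
      | zero => simp [aux_esymm_zero]
      | succ k => simp [Multiset.esymm, Multiset.powersetCard_zero_right]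
  | cons a t ih =>
      have ha : 0 ≤ a := hs a (Multiset.mem_cons_self a t)
      have ht : ∀ r ∈ t, 0 ≤ r := fun r hr => hs r (Multiset.mem_cons_of_mem hr)
      cases k with
      | zero => simp [aux_esymm_zero]
      | succ k =>
          rw [aux_esymm_cons]
          have := ih ht (k + 1)
          have := ih ht k
          nlinarith

lemma aux_newton (s : Multiset ℝ) (hs : ∀ r ∈ s, 0 ≤ r) :
    ∀ m j : ℕ, m ≤ j →
      s.esymm m * s.esymm (j + 1) ≤ s.esymm (m + 1) * s.esymm j := by
  induction s using Multiset.induction with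
  | empty =>
      intro m j _
      have h1 : (0 : Multiset ℝ).esymm (j + 1) = 0 := by simp [Multiset.esymm, Multiset.powersetCard_zero_right]
      rw [h1, mul_zero]
      have h2 : 0 ≤ (0 : Multiset ℝ).esymm (m + 1) := aux_esymm_nonneg _ (by simp) _
      have h3 : 0 ≤ (0 : Multiset ℝ).esymm j := aux_esymm_nonneg _ (by simp) _
      positivity
  | cons a t ih =>
      have ha : 0 ≤ a := hs a (Multiset.mem_cons_self a t)
      have ht : ∀ r ∈ t, 0 ≤ r := fun r hr => hs r (Multiset.mem_cons_of_mem hr)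
      have hE : ∀ k, 0 ≤ t.esymm k := aux_esymm_nonneg t ht
      intro m j hmj
      cases m with
      | zero =>
          cases j with
          | zero => simp [aux_esymm_zero]
          | succ j =>
              rw [aux_esymm_zero, aux_esymm_cons, aux_esymm_cons, aux_esymm_cons]
              simp only [aux_esymm_zero, mul_one]
              have h1 := ih ht 0 (j + 1) (Nat.zero_le _)
              rw [aux_esymm_zero, one_mul] at h1
              nlinarith [hE 1, hE j, hE (j + 1), hE (j + 2),
                mul_nonneg ha (mul_nonneg (hE 1) (hE j)),
                mul_nonneg (mul_nonneg ha ha) (hE j)]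
      | succ m =>
          cases j with
          | zero => omega
          | succ j =>
              have hmj' : m ≤ j := Nat.succ_le_succ_iff.mp hmj
              rw [aux_esymm_cons, aux_esymm_cons, aux_esymm_cons, aux_esymm_cons]
              have h1 := ih ht (m + 1) (j + 1) hmj
              have h2 := ih ht m j hmj'
              have h3 := ih ht m (j + 1) (le_trans hmj' (Nat.le_succ _))
              rcases Nat.lt_or_ge m j with hlt | hge
              · have h4 := ih ht (m + 1) j hlt
                nlinarith [mul_nonneg ha (sub_nonneg.2 h4), mul_nonneg ha (sub_nonneg.2 h3),
                  mul_nonneg (mul_nonneg ha ha) (sub_nonneg.2 h2), h1]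
              · have heq : m = j := le_antisymm hmj' hge
                subst heq
                nlinarith [mul_nonneg (mul_nonneg ha ha) (sub_nonneg.2 h2), h1]

/-- For a vector `x` of `n ≥ 2` positive reals, every `k ≥ 2`, and nonnegative reals
`a, b`: `e_k(x∪{a,b}) e_{k−1}(x) ≥ e_{k+1}(x∪{a,b}) e_{k−2}(x)`, where `x∪{a,b}` is the
vector of length `n+2` obtained by appending `a` and `b`. -/
theorem stmt_12 (n : ℕ) (hn : 2 ≤ n) (x : Fin n → ℝ) (hx : ∀ i, 0 < x i)
    (k : ℕ) (hk : 2 ≤ k) (a b : ℝ) (ha : 0 ≤ a) (hb : 0 ≤ b) :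
    esym (k + 1) (Fin.cons a (Fin.cons b x)) * esym (k - 2) x
      ≤ esym k (Fin.cons a (Fin.cons b x)) * esym (k - 1) x := by
  obtain ⟨k', rfl⟩ : ∃ k', k = k' + 2 := ⟨k - 2, by omega⟩
  set s : Multiset ℝ := Multiset.map x Finset.univ.val with hs
  have hsnn : ∀ r ∈ s, 0 ≤ r := by
    intro r hr
    obtain ⟨i, _, rfl⟩ := Multiset.mem_map.mp hr
    exact (hx i).le
  have hE : ∀ k, 0 ≤ s.esymm k := aux_esymm_nonneg s hsnn
  have key : ∀ m j : ℕ, m ≤ j → s.esymm m * s.esymm (j + 1) ≤ s.esymm (m + 1) * s.esymm j :=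
    aux_newton s hsnn
  have e1 : ∀ K, esym K (Fin.cons a (Fin.cons b x)) = (a ::ₘ b ::ₘ s).esymm K := by
    intro K
    rw [aux_esym_eq_esymm, aux_map_cons, aux_map_cons]
  have e2 : ∀ K, esym K x = s.esymm K := fun K => aux_esym_eq_esymm K x
  simp only [Nat.add_sub_cancel, show k' + 2 - 1 = k' + 1 from rfl, e1, e2]
  rw [aux_esymm_cons, aux_esymm_cons, aux_esymm_cons, aux_esymm_cons,
    aux_esymm_cons, aux_esymm_cons]
  have h1 := key k' (k' + 2) (by omega)
  have h2 := key k' (k' + 1) (by omega)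
  nlinarith [mul_nonneg ha (sub_nonneg.2 h2), mul_nonneg hb (sub_nonneg.2 h2),
    mul_nonneg (mul_nonneg ha hb) (hE (k' + 1)), mul_nonneg (mul_nonneg ha hb) (hE k'), h1]
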